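/- arXiv:1611.01092 — 2 statements merged into one kernel-verified Lean document; each statement's English description precedes it below -/
import Mathlib

section
/- Let k ≥ 1. In the polynomial ring ℚ[x₁,…,x_k,y₁,y₂], set Xᵢ = (y₁+y₂)/2 − xᵢ and Y = (y₁+y₂)²/4 − y₁y₂. Then ∑_{j=0}^{k−1} (−1)^j e_j(x₁,…,x_k) · (∑_{ν=0}^{k−1−j} y₁^ν y₂^{k−1−j−ν}) = ∑_{ν=0}^{⌊(k−1)/2⌋} e_{k−1−2ν}(X₁,…,X_k) · Y^ν, where e_j denotes the elementary symmetric polynomial of degree j (with e₀ = 1). -/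
open MvPolynomial Finset

noncomputable section

/-- The variable xᵢ in ℚ[x₁,…,x_k,y₁,y₂]. -/
def xv (k : ℕ) (i : Fin k) : MvPolynomial (Fin k ⊕ Fin 2) ℚ := X (Sum.inl i)

/-- The variable y_j in ℚ[x₁,…,x_k,y₁,y₂]. -/
def yv (k : ℕ) (j : Fin 2) : MvPolynomial (Fin k ⊕ Fin 2) ℚ := X (Sum.inr j)

/-- The elementary symmetric polynomial e_j(x₁,…,x_k). -/
def ex (k j : ℕ) : MvPolynomial (Fin k ⊕ Fin 2) ℚ :=
  ∑ J ∈ powersetCard j (univ : Finset (Fin k)), ∏ i ∈ J, xv k i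

/-- Xᵢ = (y₁+y₂)/2 − xᵢ. -/
def Xg (k : ℕ) (i : Fin k) : MvPolynomial (Fin k ⊕ Fin 2) ℚ :=
  C (1 / 2 : ℚ) * (yv k 0 + yv k 1) - xv k i

/-- Y = (y₁+y₂)²/4 − y₁y₂. -/
def Yg (k : ℕ) : MvPolynomial (Fin k ⊕ Fin 2) ℚ :=
  C (1 / 4 : ℚ) * (yv k 0 + yv k 1) ^ 2 - yv k 0 * yv k 1

/-- The elementary symmetric polynomial e_j(X₁,…,X_k) in the Xᵢ's. -/
def eX (k j : ℕ) : MvPolynomial (Fin k ⊕ Fin 2) ℚ :=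
  ∑ J ∈ powersetCard j (univ : Finset (Fin k)), ∏ i ∈ J, Xg k i

/-- auxiliary: expansion of ∏ (y - xᵢ). -/
theorem aux_prod_sub {R : Type*} [CommRing R] {ι : Type*} [DecidableEq ι]
    (s : Finset ι) (x : ι → R) (y : R) :
    ∏ i ∈ s, (y - x i) =
      ∑ j ∈ range (s.card + 1),
        (-1 : R) ^ j * (∑ t ∈ powersetCard j s, ∏ i ∈ t, x i) * y ^ (s.card - j) := by
  rw [Finset.prod_sub, powerset_card_disjiUnion]
  erw [sum_disjiUnion]
  refine Finset.sum_congr rfl fun j hj => ?_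
  rw [Finset.mul_sum, Finset.sum_mul]
  refine Finset.sum_congr rfl fun t ht => ?_
  rw [mem_powersetCard] at ht
  rw [Finset.prod_const, card_sdiff_of_subset ht.1, ht.2]
  ring

/-- auxiliary: expansion of ∏ (xᵢ + y). -/
theorem aux_prod_add {R : Type*} [CommRing R] {ι : Type*} [DecidableEq ι]
    (s : Finset ι) (x : ι → R) (y : R) :
    ∏ i ∈ s, (x i + y) =
      ∑ j ∈ range (s.card + 1),
        (∑ t ∈ powersetCard j s, ∏ i ∈ t, x i) * y ^ (s.card - j) := by
  rw [Finset.prod_add, powerset_card_disjiUnion]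
  erw [sum_disjiUnion]
  refine Finset.sum_congr rfl fun j hj => ?_
  rw [Finset.sum_mul]
  refine Finset.sum_congr rfl fun t ht => ?_
  rw [mem_powersetCard] at ht
  rw [Finset.prod_const, card_sdiff_of_subset ht.1, ht.2]

/-- Lemma 4.3, first identity: the symmetrized tautological relation R_I for
I = {1,…,k} expressed in the generators Xᵢ and Y. -/
theorem stmt6 (k : ℕ) (hk : 1 ≤ k) :
    ∑ j ∈ range k, (-1 : MvPolynomial (Fin k ⊕ Fin 2) ℚ) ^ j * ex k j *
        (∑ ν ∈ range (k - j), yv k 0 ^ ν * yv k 1 ^ (k - 1 - j - ν)) =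
      ∑ ν ∈ range ((k - 1) / 2 + 1), eX k (k - 1 - 2 * ν) * Yg k ^ ν := by
  set R := MvPolynomial (Fin k ⊕ Fin 2) ℚ
  set y0 : R := yv k 0 with hy0
  set y1 : R := yv k 1 with hy1
  set D : R := C (1 / 2 : ℚ) * (y0 - y1) with hDdef
  have h2 : (C (1 / 2 : ℚ) : R) + C (1 / 2 : ℚ) = 1 := by
    rw [← C_add]; norm_num
  have hcq : (C (1 / 2 : ℚ) : R) * C (1 / 2 : ℚ) = C (1 / 4 : ℚ) := by
    rw [← C_mul]; norm_num
  have hq : (C (1 / 4 : ℚ) : R) * 4 = 1 := by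
    rw [show (4 : R) = C (4 : ℚ) from (map_ofNat C 4).symm, ← C_mul]
    norm_num
  have hd : y0 - y1 ≠ 0 := by
    rw [sub_ne_zero]
    intro h
    have := MvPolynomial.X_injective h
    simp at this
  apply mul_left_cancel₀ hd
  -- products
  have hsum : ∀ i : Fin k, y0 - xv k i = Xg k i + D := by
    intro i
    simp only [Xg, hDdef, ← hy0, ← hy1]
    linear_combination (-y0) * h2
  have hsum' : ∀ i : Fin k, y1 - xv k i = Xg k i + (-D) := by
    intro i
    simp only [Xg, hDdef, ← hy0, ← hy1]
    linear_combination (-y1) * h2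
  have hD2 : D ^ 2 = Yg k := by
    simp only [Yg, hDdef, ← hy0, ← hy1]
    linear_combination (y0 - y1) ^ 2 * hcq + (-(y0 * y1)) * hq
  have hDD : y0 - y1 = D + D := by
    rw [hDdef]; linear_combination (-(y0 - y1)) * h2
  -- LHS computation
  have hprod : ∀ y : R, ∏ i : Fin k, (y - xv k i) =
      ∑ j ∈ range (k + 1), (-1 : R) ^ j * ex k j * y ^ (k - j) := by
    intro y
    simpa [ex, card_univ] using aux_prod_sub (univ : Finset (Fin k)) (xv k) y
  have hprodX : ∀ z : R, ∏ i : Fin k, (Xg k i + z) =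
      ∑ j ∈ range (k + 1), eX k j * z ^ (k - j) := by
    intro z
    simpa [eX, card_univ] using aux_prod_add (univ : Finset (Fin k)) (Xg k) z
  have key1 : (y0 - y1) *
      (∑ j ∈ range k, (-1 : R) ^ j * ex k j *
        (∑ ν ∈ range (k - j), y0 ^ ν * y1 ^ (k - 1 - j - ν))) =
      (∏ i : Fin k, (y0 - xv k i)) - ∏ i : Fin k, (y1 - xv k i) := by
    rw [hprod y0, hprod y1, ← Finset.sum_sub_distrib, Finset.sum_range_succ,
      Nat.sub_self]
    simp only [pow_zero, mul_one, sub_self, add_zero]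
    rw [Finset.mul_sum]
    refine Finset.sum_congr rfl fun j hj => ?_
    have hj' : j < k := mem_range.mp hj
    have hexp : ∀ ν, k - 1 - j - ν = k - j - 1 - ν := fun ν => by omega
    simp only [hexp]
    calc (y0 - y1) * ((-1 : R) ^ j * ex k j * ∑ ν ∈ range (k - j), y0 ^ ν * y1 ^ (k - j - 1 - ν))
        = (-1 : R) ^ j * ex k j *
            ((∑ ν ∈ range (k - j), y0 ^ ν * y1 ^ (k - j - 1 - ν)) * (y0 - y1)) := by ring
      _ = (-1 : R) ^ j * ex k j * (y0 ^ (k - j) - y1 ^ (k - j)) := by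
          rw [geom_sum₂_mul]
      _ = (-1 : R) ^ j * ex k j * y0 ^ (k - j) - (-1 : R) ^ j * ex k j * y1 ^ (k - j) := by ring
  have key2 : (y0 - y1) * (∑ ν ∈ range ((k - 1) / 2 + 1), eX k (k - 1 - 2 * ν) * Yg k ^ ν) =
      (∏ i : Fin k, (Xg k i + D)) - ∏ i : Fin k, (Xg k i + (-D)) := by
    rw [hprodX D, hprodX (-D), ← Finset.sum_sub_distrib]
    have hzero : ∀ j ∈ (range (k + 1)).filter (fun j => ¬ Odd (k - j)),
        eX k j * D ^ (k - j) - eX k j * (-D) ^ (k - j) = 0 := by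
      intro j hj
      rw [mem_filter] at hj
      have : Even (k - j) := Nat.not_odd_iff_even.mp hj.2
      rw [this.neg_pow]
      ring
    rw [← Finset.sum_filter_add_sum_filter_not (range (k + 1)) (fun j => Odd (k - j)),
      Finset.sum_eq_zero hzero, add_zero, Finset.mul_sum]
    symm
    refine Finset.sum_nbij' (fun j => (k - 1 - j) / 2) (fun ν => k - 1 - 2 * ν) ?_ ?_ ?_ ?_ ?_
    · intro j hj
      rw [mem_filter, mem_range, Nat.odd_iff] at hj
      rw [mem_range]
      omega
    · intro ν hν
      rw [mem_range] at hν
      rw [mem_filter, mem_range, Nat.odd_iff]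
      omega
    · intro j hj
      rw [mem_filter, mem_range, Nat.odd_iff] at hj
      omega
    · intro ν hν
      rw [mem_range] at hν
      omega
    · intro j hj
      rw [mem_filter, mem_range, Nat.odd_iff] at hj
      have h1 : k - j = 2 * ((k - 1 - j) / 2) + 1 := by omega
      have h2' : k - 1 - 2 * ((k - 1 - j) / 2) = j := by omega
      rw [h2', h1, ← hD2, hDD]
      have : Odd (2 * ((k - 1 - j) / 2) + 1) := ⟨(k - 1 - j) / 2, by ring⟩
      rw [this.neg_pow]
      rw [pow_succ, pow_mul]
      ring
  rw [key1, key2]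
  congr 1
  · exact Finset.prod_congr rfl fun i _ => hsum i
  · exact Finset.prod_congr rfl fun i _ => hsum' i


end
end

section
/- Let k ≥ 0. In the polynomial ring ℚ[x₁,…,x_k,y₁,y₂], set Xᵢ = (y₁+y₂)/2 − xᵢ and Y = (y₁+y₂)²/4 − y₁y₂. Then (1/2) · ∑_{j=0}^{k} (−1)^j e_j(x₁,…,x_k) · (y₁^{k−j} + y₂^{k−j}) = ∑_{ν=0}^{⌊k/2⌋} e_{k−2ν}(X₁,…,X_k) · Y^ν, where e_j denotes the elementary symmetric polynomial of degree j (with e₀ = 1). -/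
open MvPolynomial Finset

section Helpers
variable {R : Type*} [CommRing R]


-- expansion of a product by powerset, grouped by cardinality
lemma prodExpand (k : ℕ) (t : Fin k → R) (u : R) :
    ∏ i, (t i + u) =
      ∑ j ∈ range (k + 1),
        (∑ J ∈ powersetCard j (univ : Finset (Fin k)), ∏ i ∈ J, t i) * u ^ (k - j) := by
  rw [Finset.prod_add, Finset.sum_powerset]
  simp only [card_univ, Fintype.card_fin]
  refine Finset.sum_congr rfl fun j hj => ?_
  rw [Finset.sum_mul]
  refine Finset.sum_congr rfl fun J hJ => ?_
  have hJc : J.card = j := (Finset.mem_powersetCard.mp hJ).2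
  rw [Finset.prod_const, Finset.card_sdiff_of_subset (Finset.subset_univ J), card_univ,
    Fintype.card_fin, hJc]

lemma lemA (k : ℕ) (t : Fin k → R) (y : R) :
    ∏ i, (y - t i) =
      ∑ j ∈ range (k + 1),
        (-1 : R) ^ j * (∑ J ∈ powersetCard j (univ : Finset (Fin k)), ∏ i ∈ J, t i) * y ^ (k - j) := by
  have h := prodExpand k (fun i => -t i) y
  simp only [neg_add_eq_sub] at h
  rw [h]
  refine Finset.sum_congr rfl fun j hj => ?_
  rw [Finset.mul_sum, Finset.sum_mul, Finset.sum_mul]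
  refine Finset.sum_congr rfl fun J hJ => ?_
  have hJc : J.card = j := (Finset.mem_powersetCard.mp hJ).2
  have : ∏ i ∈ J, -t i = (-1 : R) ^ J.card * ∏ i ∈ J, t i := by
    rw [← Finset.prod_const (-1 : R), ← Finset.prod_mul_distrib]
    simp
  rw [this, hJc]

lemma lemB (k : ℕ) (t : Fin k → R) (u : R) :
    (∏ i, (t i + u)) + ∏ i, (t i - u) =
      2 * ∑ ν ∈ range (k / 2 + 1),
        (∑ J ∈ powersetCard (k - 2 * ν) (univ : Finset (Fin k)), ∏ i ∈ J, t i) * (u ^ 2) ^ ν := by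
  have h2 : (∏ i, (t i - u)) = ∏ i, (t i + (-u)) := by simp [sub_eq_add_neg]
  rw [prodExpand k t u, h2, prodExpand k t (-u), ← Finset.sum_add_distrib]
  have key : ∀ j ∈ range (k + 1),
      (∑ J ∈ powersetCard j (univ : Finset (Fin k)), ∏ i ∈ J, t i) * u ^ (k - j) +
        (∑ J ∈ powersetCard j (univ : Finset (Fin k)), ∏ i ∈ J, t i) * (-u) ^ (k - j) =
      (∑ J ∈ powersetCard j (univ : Finset (Fin k)), ∏ i ∈ J, t i) *
        (u ^ (k - j) + (-u) ^ (k - j)) := fun j _ => by ring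
  rw [Finset.sum_congr rfl key]
  rw [← Finset.sum_filter_add_sum_filter_not (range (k + 1)) (fun j => Even (k - j))]
  have hodd : ∑ j ∈ (range (k + 1)).filter (fun j => ¬ Even (k - j)),
      (∑ J ∈ powersetCard j (univ : Finset (Fin k)), ∏ i ∈ J, t i) *
        (u ^ (k - j) + (-u) ^ (k - j)) = 0 := by
    refine Finset.sum_eq_zero fun j hj => ?_
    have h : ¬ Even (k - j) := (Finset.mem_filter.mp hj).2
    rw [Odd.neg_pow (Nat.not_even_iff_odd.mp h)]
    ring
  rw [hodd, add_zero, Finset.mul_sum]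
  refine (Finset.sum_nbij' (i := fun ν => k - 2 * ν) (j := fun j => (k - j) / 2)
    ?_ ?_ ?_ ?_ ?_).symm
  · intro ν hν
    simp only [Finset.mem_filter, Finset.mem_range] at hν ⊢
    refine ⟨by omega, ⟨ν, by omega⟩⟩
  · intro j hj
    simp only [Finset.mem_filter, Finset.mem_range] at hj ⊢
    obtain ⟨hj1, ⟨m, hm⟩⟩ := hj
    omega
  · intro ν hν
    simp only [Finset.mem_range] at hν
    omega
  · intro j hj
    simp only [Finset.mem_filter, Finset.mem_range] at hj
    obtain ⟨hj1, ⟨m, hm⟩⟩ := hj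
    omega
  · intro ν hν
    simp only [Finset.mem_range] at hν
    have h1 : k - (k - 2 * ν) = 2 * ν := by omega
    rw [h1, Even.neg_pow (even_two_mul ν), ← pow_mul, mul_comm 2 ν]
    ring



end Helpers

noncomputable section

/-- Lemma 4.3, second identity: the symmetrized tautological relation S_I for
I = {1,…,k} expressed in the generators Xᵢ and Y. -/
theorem stmt7 (k : ℕ) :
    C (1 / 2 : ℚ) * ∑ j ∈ range (k + 1), (-1 : MvPolynomial (Fin k ⊕ Fin 2) ℚ) ^ j * ex k j *
        (yv k 0 ^ (k - j) + yv k 1 ^ (k - j)) =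
      ∑ ν ∈ range (k / 2 + 1), eX k (k - 2 * ν) * Yg k ^ ν := by
  have h2 : (C (1 / 2 : ℚ) : MvPolynomial (Fin k ⊕ Fin 2) ℚ) * 2 = 1 := by
    rw [show (2 : MvPolynomial (Fin k ⊕ Fin 2) ℚ) = C 2 from (map_ofNat C 2).symm, ← C_mul]
    norm_num
  set u : MvPolynomial (Fin k ⊕ Fin 2) ℚ := C (1 / 2 : ℚ) * (yv k 0 - yv k 1) with hu
  have hA : ∀ y : MvPolynomial (Fin k ⊕ Fin 2) ℚ,
      ∑ j ∈ range (k + 1), (-1 : MvPolynomial (Fin k ⊕ Fin 2) ℚ) ^ j * ex k j * y ^ (k - j)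
        = ∏ i, (y - xv k i) := fun y => by
    simp only [ex]
    exact (lemA k (xv k) y).symm
  have hsplit : ∑ j ∈ range (k + 1), (-1 : MvPolynomial (Fin k ⊕ Fin 2) ℚ) ^ j * ex k j *
        (yv k 0 ^ (k - j) + yv k 1 ^ (k - j))
      = (∑ j ∈ range (k + 1), (-1 : MvPolynomial (Fin k ⊕ Fin 2) ℚ) ^ j * ex k j *
          yv k 0 ^ (k - j))
        + ∑ j ∈ range (k + 1), (-1 : MvPolynomial (Fin k ⊕ Fin 2) ℚ) ^ j * ex k j *
          yv k 1 ^ (k - j) := by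
    rw [← Finset.sum_add_distrib]
    exact Finset.sum_congr rfl fun j _ => by ring
  rw [hsplit, hA (yv k 0), hA (yv k 1)]
  have hp0 : ∏ i, (yv k 0 - xv k i) = ∏ i, (Xg k i + u) :=
    Finset.prod_congr rfl fun i _ => by
      simp only [Xg, hu]
      linear_combination (-(yv k 0)) * h2
  have hp1 : ∏ i, (yv k 1 - xv k i) = ∏ i, (Xg k i - u) :=
    Finset.prod_congr rfl fun i _ => by
      simp only [Xg, hu]
      linear_combination (-(yv k 1)) * h2
  rw [hp0, hp1, lemB k (Xg k) u]
  have h4 : (C (1 / 4 : ℚ) : MvPolynomial (Fin k ⊕ Fin 2) ℚ)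
      = C (1 / 2 : ℚ) * C (1 / 2 : ℚ) := by
    rw [← C_mul]; norm_num
  have hu2 : u ^ 2 = Yg k := by
    simp only [Yg, hu, h4]
    linear_combination (-(yv k 0 * yv k 1) * (C (1 / 2 : ℚ) * 2 + 1)) * h2
  rw [hu2]
  simp only [eX]
  linear_combination (∑ ν ∈ range (k / 2 + 1),
    (∑ J ∈ powersetCard (k - 2 * ν) (univ : Finset (Fin k)), ∏ i ∈ J, Xg k i) * Yg k ^ ν) * h2


end
end
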